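/- arXiv:2602.23884 — 4 statements merged into one kernel-verified Lean document; each statement's English description precedes it below -/
import Mathlib

section
/- Let G and H be finite simple graphs with G connected, and let S be a distance-equalizer set of the corona product G⊙H. If v_i and v_j are distinct vertices of G with B_G(v_i|v_j) = ∅, then (i) v_i ∈ S or v_j ∈ S, and (ii) V(H_i) ⊆ S or V(H_j) ⊆ S. -/
universe u v

variable {V : Type u} {W : Type v}

/-- A distance-equalizer set of a graph: for every pair of distinct vertices outside `S`
there is a vertex of `S` equidistant to both. -/
def IsDistEqSet {α : Type*} (G : SimpleGraph α) (S : Set α) : Prop :=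
  ∀ ⦃x y : α⦄, x ∉ S → y ∉ S → x ≠ y → ∃ w ∈ S, G.dist w x = G.dist w y

/-- The equidistant dimension of a graph: the minimum cardinality of a distance-equalizer set. -/
noncomputable def eqdim {α : Type*} (G : SimpleGraph α) : ℕ :=
  sInf {n | ∃ S : Set α, IsDistEqSet G S ∧ S.ncard = n}

/-- The bisector of two vertices: vertices equidistant to both. -/
def bisector {α : Type*} (G : SimpleGraph α) (x y : α) : Set α :=
  {w | G.dist w x = G.dist w y}

/-- The empty bisector graph of `G`: two distinct vertices are adjacent iff their bisector
in `G` is empty. -/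
def emptyBisector {α : Type*} (G : SimpleGraph α) : SimpleGraph α where
  Adj x y := x ≠ y ∧ bisector G x y = ∅
  symm := by
    constructor
    rintro x y ⟨h1, h2⟩
    refine ⟨h1.symm, Set.eq_empty_iff_forall_notMem.mpr fun w hw => ?_⟩
    exact Set.eq_empty_iff_forall_notMem.mp h2 w
      ((show G.dist w y = G.dist w x from hw).symm)
  loopless := ⟨fun _ h => h.1 rfl⟩

/-- A vertex cover of a graph: a set of vertices meeting every edge. -/
def IsVertexCover {α : Type*} (G : SimpleGraph α) (C : Set α) : Prop :=
  ∀ ⦃x y : α⦄, G.Adj x y → x ∈ C ∨ y ∈ C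

/-- An independent set of a graph: a set of pairwise non-adjacent vertices. -/
def IsIndepSet {α : Type*} (G : SimpleGraph α) (A : Set α) : Prop :=
  ∀ ⦃x y : α⦄, x ∈ A → y ∈ A → ¬ G.Adj x y

/-- The vertex cover number `β(G)`. -/
noncomputable def vcNum {α : Type*} (G : SimpleGraph α) : ℕ :=
  sInf {n | ∃ C : Set α, IsVertexCover G C ∧ C.ncard = n}

/-- The independence number `α(G)`. -/
noncomputable def indepNum {α : Type*} (G : SimpleGraph α) : ℕ :=
  sSup {n | ∃ A : Set α, IsIndepSet G A ∧ A.ncard = n}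

/-- A forward-equalized pair `(X, Y)` of `G`: `X ∪ Y = V(G)` and for every
`a ∈ X \ Y` and `b ∈ Y \ X` there is `w` with `d(w,a) = d(w,b) + 1`. -/
def IsForwardEqualizedPair {α : Type*} (G : SimpleGraph α) (X Y : Set α) : Prop :=
  X ∪ Y = Set.univ ∧
  ∀ ⦃a⦄, a ∈ X \ Y → ∀ ⦃b⦄, b ∈ Y \ X → ∃ w, G.dist w a = G.dist w b + 1

/-- `β*(G)`: the minimum of `|X ∩ Y|` over all pairs of vertex covers `X, Y` of the
empty bisector graph of `G` such that `(X, Y)` is a forward-equalized pair of `G`. -/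
noncomputable def betaStar {α : Type*} (G : SimpleGraph α) : ℕ :=
  sInf {n | ∃ X Y : Set α,
    IsVertexCover (emptyBisector G) X ∧ IsVertexCover (emptyBisector G) Y ∧
    IsForwardEqualizedPair G X Y ∧ (X ∩ Y).ncard = n}

/-- The corona product `G ⊙ H`: one copy of `H` for each vertex `i` of `G` (the vertices
`Sum.inr (i, w)`), with `i` joined to every vertex of its copy. -/
def corona (G : SimpleGraph V) (H : SimpleGraph W) : SimpleGraph (V ⊕ V × W) where
  Adj x y :=
    match x, y with
    | Sum.inl a, Sum.inl b => G.Adj a b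
    | Sum.inl a, Sum.inr p => a = p.1
    | Sum.inr p, Sum.inl a => a = p.1
    | Sum.inr p, Sum.inr q => p.1 = q.1 ∧ H.Adj p.2 q.2
  symm := by
    constructor
    rintro (a | p) (b | q) h
    · exact h.symm
    · exact h
    · exact h
    · exact ⟨h.1.symm, h.2.symm⟩
  loopless := by
    constructor
    rintro (a | p) h
    · exact G.irrefl h
    · exact H.irrefl h.2
section CoronaAux

def cproj : V ⊕ V × W → V := fun x => x.elim id Prod.fst

variable {G : SimpleGraph V} {H : SimpleGraph W}

def homInl (G : SimpleGraph V) (H : SimpleGraph W) : G →g corona G H where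
  toFun := Sum.inl
  map_rel' := fun h => h

lemma adj_proj {x y : V ⊕ V × W} (h : (corona G H).Adj x y) :
    cproj x = cproj y ∨ G.Adj (cproj x) (cproj y) := by
  rcases x with a | p <;> rcases y with b | q
  · exact Or.inr h
  · exact Or.inl h
  · exact Or.inl (show b = p.1 from h).symm
  · exact Or.inl h.1

lemma dist_proj_le (hG : G.Connected) {x y : V ⊕ V × W}
    (w : (corona G H).Walk x y) : G.dist (cproj x) (cproj y) ≤ w.length := by
  induction w with
  | nil => simp
  | @cons x x' y h p ih =>
    have h1 : G.dist (cproj x) (cproj x') ≤ 1 := by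
      rcases adj_proj h with he | ha
      · rw [he, SimpleGraph.dist_self]; exact Nat.zero_le 1
      · exact le_of_eq (SimpleGraph.dist_eq_one_iff_adj.mpr ha)
    calc G.dist (cproj x) (cproj y)
        ≤ G.dist (cproj x) (cproj x') + G.dist (cproj x') (cproj y) :=
          hG.dist_triangle
      _ ≤ 1 + p.length := Nat.add_le_add h1 ih
      _ = (SimpleGraph.Walk.cons h p).length := by simp [Nat.add_comm]

/-- Walks starting inside a copy and ending outside it have a +1 penalty. -/
lemma penalty_start (hG : G.Connected) : ∀ {x y : V ⊕ V × W}
    (w : (corona G H).Walk x y) (b : V) (v : W),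
    x = Sum.inr (b, v) → cproj y ≠ b → G.dist b (cproj y) + 1 ≤ w.length := by
  intro x y w
  induction w with
  | nil =>
    intro b v hx hy
    exact absurd (by rw [hx]; rfl) hy
  | @cons x x' y h p ih =>
    intro b v hx hy
    subst hx
    rcases x' with a | q
    · have hab : a = b := h
      subst hab
      have := dist_proj_le (H := H) hG p
      simp only [cproj, Sum.elim_inl, id] at this
      have h2 := Nat.add_le_add_right this 1
      simp only [SimpleGraph.Walk.length_cons]
      exact h2
    · have hq : b = q.1 := (h : (b, v).1 = q.1 ∧ H.Adj v q.2).1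
      have := ih b q.2 (by rw [hq]) hy
      simp only [SimpleGraph.Walk.length_cons]
      omega

lemma penalty_end (hG : G.Connected) {x : V ⊕ V × W} {a : V} {u : W}
    (w : (corona G H).Walk x (Sum.inr (a, u))) (hx : cproj x ≠ a) :
    G.dist (cproj x) a + 1 ≤ w.length := by
  have := penalty_start hG w.reverse a u rfl hx
  rwa [SimpleGraph.Walk.length_reverse, G.dist_comm] at this

lemma penalty_both (hG : G.Connected) : ∀ {x y : V ⊕ V × W}
    (w : (corona G H).Walk x y) (b : V) (v : W) (a : V) (u : W),
    x = Sum.inr (b, v) → y = Sum.inr (a, u) → b ≠ a →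
    G.dist b a + 2 ≤ w.length := by
  intro x y w
  induction w with
  | nil =>
    intro b v a u hx hy hba
    rw [hx] at hy
    exact absurd (congrArg Prod.fst (Sum.inr.injEq _ _ ▸ hy : (b, v) = (a, u))) hba
  | @cons x x' y h p ih =>
    intro b v a u hx hy hba
    subst hx; subst hy
    rcases x' with c | q
    · have hcb : c = b := h
      subst hcb
      have := penalty_end (H := H) hG p (by simpa [cproj] using hba)
      simp only [cproj, Sum.elim_inl, id] at this
      simp only [SimpleGraph.Walk.length_cons]
      omega
    · have hq : b = q.1 := (h : (b, v).1 = q.1 ∧ H.Adj v q.2).1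
      have := ih b q.2 a u (by rw [hq]) rfl hba
      simp only [SimpleGraph.Walk.length_cons]
      omega

/-- lift a G-walk to the corona. -/
def liftWalk {a b : V} (p : G.Walk a b) : (corona G H).Walk (Sum.inl a) (Sum.inl b) :=
  p.map (homInl G H)

lemma liftWalk_length {a b : V} (p : G.Walk a b) : (liftWalk (H := H) p).length = p.length :=
  SimpleGraph.Walk.length_map _ _

lemma corona_reachable_inl (hG : G.Connected) (a b : V) :
    (corona G H).Reachable (Sum.inl a) (Sum.inl b) :=
  ⟨liftWalk (hG a b).some⟩

lemma dist_inl_inl (hG : G.Connected) (a b : V) :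
    (corona G H).dist (Sum.inl a) (Sum.inl b) = G.dist a b := by
  apply le_antisymm
  · obtain ⟨p, hp⟩ := (hG a b).exists_walk_length_eq_dist
    calc (corona G H).dist (Sum.inl a) (Sum.inl b)
        ≤ (liftWalk (H := H) p).length := SimpleGraph.dist_le _
      _ = G.dist a b := by rw [liftWalk_length, hp]
  · obtain ⟨w, hw⟩ := (corona_reachable_inl (H := H) hG a b).exists_walk_length_eq_dist
    have := dist_proj_le hG w
    rw [hw] at this
    exact this

lemma dist_inr_inl (hG : G.Connected) (a b : V) (v : W) :
    (corona G H).dist (Sum.inr (b, v)) (Sum.inl a) = G.dist b a + 1 := by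
  obtain ⟨p, hp⟩ := (hG b a).exists_walk_length_eq_dist
  have hadj : (corona G H).Adj (Sum.inr (b, v)) (Sum.inl b) := rfl
  set w : (corona G H).Walk (Sum.inr (b, v)) (Sum.inl a) :=
    SimpleGraph.Walk.cons hadj (liftWalk p) with hwdef
  apply le_antisymm
  · calc (corona G H).dist (Sum.inr (b, v)) (Sum.inl a)
        ≤ w.length := SimpleGraph.dist_le _
      _ = G.dist b a + 1 := by
          rw [hwdef]
          simp [liftWalk_length, hp]
  · have hreach : (corona G H).Reachable (Sum.inr (b, v)) (Sum.inl a) := ⟨w⟩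
    obtain ⟨q, hq⟩ := hreach.exists_walk_length_eq_dist
    by_cases hab : a = b
    · subst hab
      rw [SimpleGraph.dist_eq_one_iff_adj.mpr hadj, SimpleGraph.dist_self]
    · have := penalty_start hG q b v rfl (by simpa [cproj] using hab)
      rw [hq] at this
      simpa [cproj] using this

lemma dist_inl_inr (hG : G.Connected) {a b : V} (v : W) :
    (corona G H).dist (Sum.inl a) (Sum.inr (b, v)) = G.dist b a + 1 := by
  rw [SimpleGraph.dist_comm]; exact dist_inr_inl hG a b v

lemma dist_inr_inr_ne (hG : G.Connected) {a b : V} (hba : b ≠ a) (v u : W) :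
    (corona G H).dist (Sum.inr (b, v)) (Sum.inr (a, u)) = G.dist b a + 2 := by
  obtain ⟨p, hp⟩ := (hG b a).exists_walk_length_eq_dist
  have hadj1 : (corona G H).Adj (Sum.inr (b, v)) (Sum.inl b) := rfl
  have hadj2 : (corona G H).Adj (Sum.inl a) (Sum.inr (a, u)) := rfl
  set w : (corona G H).Walk (Sum.inr (b, v)) (Sum.inr (a, u)) :=
    SimpleGraph.Walk.cons hadj1 ((liftWalk p).concat hadj2) with hwdef
  apply le_antisymm
  · calc (corona G H).dist (Sum.inr (b, v)) (Sum.inr (a, u))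
        ≤ w.length := SimpleGraph.dist_le _
      _ = G.dist b a + 2 := by
          rw [hwdef]
          simp [liftWalk_length, SimpleGraph.Walk.length_concat, hp]
  · have hreach : (corona G H).Reachable (Sum.inr (b, v)) (Sum.inr (a, u)) := ⟨w⟩
    obtain ⟨q, hq⟩ := hreach.exists_walk_length_eq_dist
    have := penalty_both hG q b v a u rfl rfl hba
    omega

lemma dist_inr_inr_same_le (a : V) (v u : W) :
    (corona G H).dist (Sum.inr (a, v)) (Sum.inr (a, u)) ≤ 2 := by
  have hadj1 : (corona G H).Adj (Sum.inr (a, v)) (Sum.inl a) := rfl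
  have hadj2 : (corona G H).Adj (Sum.inl a) (Sum.inr (a, u)) := rfl
  calc (corona G H).dist (Sum.inr (a, v)) (Sum.inr (a, u))
      ≤ (SimpleGraph.Walk.cons hadj1 (SimpleGraph.Walk.cons hadj2
          SimpleGraph.Walk.nil)).length := SimpleGraph.dist_le _
    _ = 2 := rfl

end CoronaAux

/-- If `S` is a distance-equalizer set of `G ⊙ H` and `i ≠ j` are vertices
of `G` with empty bisector, then `vᵢ ∈ S` or `vⱼ ∈ S`, and `V(Hᵢ) ⊆ S` or `V(Hⱼ) ⊆ S`. -/
theorem corona_distEqSet_of_bisector_empty [Fintype V] [Fintype W]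
    (G : SimpleGraph V) (H : SimpleGraph W) (hG : G.Connected)
    (S : Set (V ⊕ V × W)) (hS : IsDistEqSet (corona G H) S)
    (i j : V) (hij : i ≠ j) (hbis : bisector G i j = ∅) :
    (Sum.inl i ∈ S ∨ Sum.inl j ∈ S) ∧
    ({x : V ⊕ V × W | ∃ w : W, x = Sum.inr (i, w)} ⊆ S ∨
      {x : V ⊕ V × W | ∃ w : W, x = Sum.inr (j, w)} ⊆ S) := by
  constructor
  · by_contra hcon
    push_neg at hcon
    obtain ⟨hi, hj⟩ := hcon
    obtain ⟨w, hwS, hd⟩ := hS hi hj (by simp [hij])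
    have hb : ∃ b : V, G.dist b i = G.dist b j := by
      rcases w with b | ⟨b, v⟩
      · exact ⟨b, by rwa [dist_inl_inl hG, dist_inl_inl hG] at hd⟩
      · rw [dist_inr_inl hG, dist_inr_inl hG] at hd
        exact ⟨b, by omega⟩
    obtain ⟨b, hb⟩ := hb
    have : b ∈ (∅ : Set V) := hbis ▸ (hb : b ∈ bisector G i j)
    exact this.elim
  · by_contra hcon
    push_neg at hcon
    obtain ⟨h1, h2⟩ := hcon
    rw [Set.not_subset] at h1 h2
    obtain ⟨x1, hx1mem, hx1S⟩ := h1
    obtain ⟨x2, hx2mem, hx2S⟩ := h2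
    obtain ⟨w1, rfl⟩ := hx1mem
    obtain ⟨w2, rfl⟩ := hx2mem
    have hne : (Sum.inr (i, w1) : V ⊕ V × W) ≠ Sum.inr (j, w2) := by
      simp [hij]
    obtain ⟨z, hzS, hd⟩ := hS hx1S hx2S hne
    have hdij : 1 ≤ G.dist i j := hG.pos_dist_of_ne hij
    have hdji : 1 ≤ G.dist j i := hG.pos_dist_of_ne (Ne.symm hij)
    have hfalse : False := by
      rcases z with b | ⟨b, v⟩
      · rw [dist_inl_inr hG, dist_inl_inr hG] at hd
        have hb : b ∈ bisector G i j := by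
          show G.dist b i = G.dist b j
          rw [G.dist_comm (u := b) (v := i), G.dist_comm (u := b) (v := j)]
          omega
        exact (hbis ▸ hb : b ∈ (∅ : Set V)).elim
      · by_cases hbi : b = i
        · subst hbi
          have hle := dist_inr_inr_same_le (G := G) (H := H) b v w1
          rw [dist_inr_inr_ne hG hij v w2] at hd
          omega
        · by_cases hbj : b = j
          · subst hbj
            have hle := dist_inr_inr_same_le (G := G) (H := H) b v w2
            rw [dist_inr_inr_ne hG hbi v w1] at hd
            omega
          · rw [dist_inr_inr_ne hG hbi v w1, dist_inr_inr_ne hG hbj v w2] at hd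
            have hb : b ∈ bisector G i j := by
              show G.dist b i = G.dist b j
              omega
            exact (hbis ▸ hb : b ∈ (∅ : Set V)).elim
    exact hfalse
end

section
/- If G and H are finite simple graphs such that G is connected, then ξ(G⊙H) ≤ β(Ĝ)·n(H) + n(G). -/
universe u v

variable {V : Type u} {W : Type v}

section Aux

variable {V : Type u} {W : Type v}

private lemma corona_dist_eq [Fintype V] [Fintype W] (G : SimpleGraph V) (H : SimpleGraph W)
    (hG : G.Connected) (a i : V) (w : W) :
    (corona G H).dist (Sum.inl a) (Sum.inr (i, w)) = G.dist a i + 1 := by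
  classical
  -- the homomorphism from G into the corona via inl
  let emb : G →g corona G H := ⟨Sum.inl, fun h => h⟩
  obtain ⟨p, hp⟩ := hG.exists_walk_length_eq_dist a i
  have hadj : (corona G H).Adj (Sum.inl i) (Sum.inr (i, w)) := rfl
  have hwalk : (corona G H).Walk (Sum.inl a) (Sum.inr (i, w)) :=
    (p.map emb).concat hadj
  have hupper : (corona G H).dist (Sum.inl a) (Sum.inr (i, w)) ≤ G.dist a i + 1 := by
    have := SimpleGraph.dist_le ((p.map emb).concat hadj)
    rwa [SimpleGraph.Walk.length_concat, SimpleGraph.Walk.length_map, hp] at this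
  -- lower bound via a Lipschitz potential function
  set f : V ⊕ V × W → ℕ := fun x =>
    match x with
    | Sum.inl b => G.dist b i + 1
    | Sum.inr q => if q = (i, w) then 0 else G.dist q.1 i with hf
  have key : ∀ x z (q : (corona G H).Walk x z), z = Sum.inr (i, w) → f x ≤ q.length := by
    intro x z q
    induction q with
    | nil => rintro rfl; simp [hf]
    | @cons x y z h q ih =>
      intro hz
      have ih := ih hz
      have step : f x ≤ f y + 1 := by
        rcases x with b | r <;> rcases y with c | s
        · -- inl, inl : G.Adj b c
          have h1 : G.dist b i ≤ G.dist b c + G.dist c i := hG.dist_triangle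
          have hbc : G.Adj b c := h
          have h2 : G.dist b c ≤ 1 := by
            simpa using SimpleGraph.dist_le hbc.toWalk
          simp only [hf]
          omega
        · -- inl b, inr s : b = s.1
          have hb : b = s.1 := h
          by_cases hs : s = (i, w)
          · subst hs
            simp [hf, hb, SimpleGraph.dist_self]
          · simp [hf, hs, hb]
        · -- inr r, inl c : c = r.1
          have hc : c = r.1 := h
          by_cases hr : r = (i, w)
          · simp [hf, hr]
          · simp only [hf, hr, if_false, hc]; omega
        · -- inr r, inr s : r.1 = s.1
          have h1 : r.1 = s.1 := h.1
          by_cases hr : r = (i, w)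
          · simp [hf, hr]
          · by_cases hs : s = (i, w)
            · have : r.1 = i := by rw [h1, hs]
              simp [hf, hr, hs, this, SimpleGraph.dist_self]
            · simp [hf, hr, hs, h1]
      calc f x ≤ f y + 1 := step
        _ ≤ q.length + 1 := by omega
        _ = (SimpleGraph.Walk.cons h q).length := (SimpleGraph.Walk.length_cons h q).symm
  have hreach : (corona G H).Reachable (Sum.inl a) (Sum.inr (i, w)) := ⟨hwalk⟩
  obtain ⟨q, hq⟩ := hreach.exists_walk_length_eq_dist
  have hlower : G.dist a i + 1 ≤ (corona G H).dist (Sum.inl a) (Sum.inr (i, w)) := by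
    have := key _ _ q rfl
    rw [hq] at this
    simpa [hf] using this
  omega

end Aux

/-- `ξ(G ⊙ H) ≤ β(Ĝ)·n(H) + n(G)`. -/
theorem eqdim_corona_upper_bound [Fintype V] [Fintype W] [Nonempty W]
    (G : SimpleGraph V) (H : SimpleGraph W) (hG : G.Connected) :
    eqdim (corona G H) ≤ vcNum (emptyBisector G) * Fintype.card W + Fintype.card V := by
  classical
  -- obtain a minimum vertex cover C of the empty bisector graph
  have hne : (Set.univ : Set V).ncard ∈
      {n | ∃ C : Set V, IsVertexCover (emptyBisector G) C ∧ C.ncard = n} :=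
    ⟨Set.univ, fun x y _ => Or.inl (Set.mem_univ x), rfl⟩
  obtain ⟨C, hC, hCcard⟩ := Nat.sInf_mem (⟨_, hne⟩ :
    {n | ∃ C : Set V, IsVertexCover (emptyBisector G) C ∧ C.ncard = n}.Nonempty)
  -- the distance-equalizer set
  let CF : Finset V := C.toFinite.toFinset
  let F : Finset (V ⊕ V × W) :=
    Finset.univ.image Sum.inl ∪ (CF ×ˢ Finset.univ).image Sum.inr
  have hmemF : ∀ x : V ⊕ V × W, x ∈ F ↔
      (∃ a : V, x = Sum.inl a) ∨ (∃ q : V × W, q.1 ∈ C ∧ x = Sum.inr q) := by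
    intro x
    simp only [F, CF, Finset.mem_union, Finset.mem_image, Finset.mem_univ, true_and,
      Finset.mem_product, Set.Finite.mem_toFinset, and_true]
    constructor
    · rintro (⟨a, rfl⟩ | ⟨q, hq, rfl⟩)
      · exact Or.inl ⟨a, rfl⟩
      · exact Or.inr ⟨q, hq, rfl⟩
    · rintro (⟨a, rfl⟩ | ⟨q, hq, rfl⟩)
      · exact Or.inl ⟨a, rfl⟩
      · exact Or.inr ⟨q, hq, rfl⟩
  -- it is a distance-equalizer set
  have hDES : IsDistEqSet (corona G H) (↑F : Set (V ⊕ V × W)) := by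
    rintro x y hx hy hxy
    rcases x with a | p
    · exact absurd ((hmemF _).mpr (Or.inl ⟨a, rfl⟩)) hx
    rcases y with b | q
    · exact absurd ((hmemF _).mpr (Or.inl ⟨b, rfl⟩)) hy
    have hp : p.1 ∉ C := fun h => hx ((hmemF _).mpr (Or.inr ⟨p, h, rfl⟩))
    have hq : q.1 ∉ C := fun h => hy ((hmemF _).mpr (Or.inr ⟨q, h, rfl⟩))
    obtain ⟨i, u⟩ := p
    obtain ⟨j, u'⟩ := q
    by_cases hpq : i = j
    · subst hpq
      refine ⟨Sum.inl i, (hmemF _).mpr (Or.inl ⟨i, rfl⟩), ?_⟩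
      rw [corona_dist_eq G H hG i i u, corona_dist_eq G H hG i i u']
    · -- i and j are not adjacent in the empty bisector graph
      have hnadj : ¬ (emptyBisector G).Adj i j := fun h => by
        rcases hC h with h' | h'
        · exact hp h'
        · exact hq h'
      have hbis : bisector G i j ≠ ∅ := fun h => hnadj (show i ≠ j ∧ bisector G i j = ∅ from ⟨hpq, h⟩)
      obtain ⟨v, hv⟩ := Set.nonempty_iff_ne_empty.mpr hbis
      refine ⟨Sum.inl v, (hmemF _).mpr (Or.inl ⟨v, rfl⟩), ?_⟩
      rw [corona_dist_eq G H hG v i u, corona_dist_eq G H hG v j u', hv]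
  -- cardinality
  have hcard : (↑F : Set (V ⊕ V × W)).ncard = C.ncard * Fintype.card W + Fintype.card V := by
    rw [Set.ncard_coe_finset]
    have hdisj : Disjoint (Finset.univ.image (Sum.inl : V → V ⊕ V × W))
        ((CF ×ˢ Finset.univ).image Sum.inr) := by
      simp only [Finset.disjoint_left, Finset.mem_image]
      rintro x ⟨a, -, rfl⟩ ⟨q, -, h⟩
      exact Sum.inr_ne_inl h
    rw [Finset.card_union_of_disjoint hdisj,
      Finset.card_image_of_injective _ Sum.inl_injective,
      Finset.card_image_of_injective _ Sum.inr_injective,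
      Finset.card_product, Finset.card_univ, Finset.card_univ]
    have : CF.card = C.ncard := by
      rw [Set.ncard_eq_toFinset_card C C.toFinite]
    rw [this]
    ring
  calc eqdim (corona G H) ≤ (↑F : Set (V ⊕ V × W)).ncard :=
        Nat.sInf_le ⟨↑F, hDES, rfl⟩
    _ = vcNum (emptyBisector G) * Fintype.card W + Fintype.card V := by
        rw [hcard, hCcard]; rfl
end

section
/- For every integer n ≥ 2 and every finite simple graph H, the corona product of the path P_n with H satisfies ξ(P_n⊙H) = ⌊n/2⌋·n(H) + ⌈n/2⌉. -/
universe u v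

variable {V : Type u} {W : Type v}

namespace EqdimCoronaPath

open SimpleGraph Finset

set_option linter.unusedSectionVars false

variable {W : Type v} [Fintype W]

open scoped Classical in
/-- Explicit distance function on the corona of a path with `H`. -/
noncomputable def D {n : ℕ} (H : SimpleGraph W) :
    (Fin n ⊕ Fin n × W) → (Fin n ⊕ Fin n × W) → ℕ
  | Sum.inl a, Sum.inl b => Nat.dist a.val b.val
  | Sum.inl a, Sum.inr p => Nat.dist a.val p.1.val + 1
  | Sum.inr p, Sum.inl b => Nat.dist p.1.val b.val + 1
  | Sum.inr p, Sum.inr q =>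
      if p.1.val = q.1.val then
        (if p.2 = q.2 then 0 else if H.Adj p.2 q.2 then 1 else 2)
      else Nat.dist p.1.val q.1.val + 2

lemma exists_walk_inl {n : ℕ} (H : SimpleGraph W) :
    ∀ (k : ℕ) (i j : Fin n), Nat.dist i.val j.val = k →
    ∃ p : (corona (pathGraph n) H).Walk (Sum.inl i) (Sum.inl j), p.length = k := by
  intro k
  induction k with
  | zero =>
    intro i j h
    have : i = j := Fin.ext (by simp [Nat.dist] at h; omega)
    subst this; exact ⟨.nil, rfl⟩
  | succ k ih =>
    intro i j h
    rcases Nat.lt_or_ge i.val j.val with hlt | hge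
    · have hi' : i.val + 1 < n := lt_of_le_of_lt hlt j.isLt
      set i' : Fin n := ⟨i.val + 1, hi'⟩ with hi'def
      have hadj : (corona (pathGraph n) H).Adj (Sum.inl i) (Sum.inl i') := by
        show (pathGraph n).Adj i i'
        rw [pathGraph_adj]; left; rfl
      obtain ⟨p, hp⟩ := ih i' j (by simp [Nat.dist, hi'def] at h ⊢; omega)
      exact ⟨.cons hadj p, by simp [hp]⟩
    · have hgt : j.val < i.val := by simp [Nat.dist] at h; omega
      have hi0 : 1 ≤ i.val := by omega
      set i' : Fin n := ⟨i.val - 1, by omega⟩ with hi'def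
      have hadj : (corona (pathGraph n) H).Adj (Sum.inl i) (Sum.inl i') := by
        show (pathGraph n).Adj i i'
        rw [pathGraph_adj]; right; simp [hi'def]; omega
      obtain ⟨p, hp⟩ := ih i' j (by simp [Nat.dist, hi'def] at h ⊢; omega)
      exact ⟨.cons hadj p, by simp [hp]⟩

lemma exists_walk_D {n : ℕ} (H : SimpleGraph W) (x y : Fin n ⊕ Fin n × W) :
    ∃ p : (corona (pathGraph n) H).Walk x y, p.length = D H x y := by
  classical
  obtain (a | ⟨i, w⟩) := x <;> obtain (b | ⟨j, w'⟩) := y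
  · exact exists_walk_inl H _ a b rfl
  · obtain ⟨p, hp⟩ := exists_walk_inl H _ a j rfl
    have hadj : (corona (pathGraph n) H).Adj (Sum.inl j) (Sum.inr (j, w')) := rfl
    exact ⟨p.concat hadj, by simp [D, hp]⟩
  · obtain ⟨p, hp⟩ := exists_walk_inl H _ i b rfl
    have hadj : (corona (pathGraph n) H).Adj (Sum.inr (i, w)) (Sum.inl i) := rfl
    exact ⟨.cons hadj p, by simp [D, hp]⟩
  · by_cases hij : i.val = j.val
    · have : i = j := Fin.ext hij
      subst this
      by_cases hw : w = w'
      · subst hw; exact ⟨.nil, by simp [D]⟩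
      · by_cases hA : H.Adj w w'
        · have hadj : (corona (pathGraph n) H).Adj (Sum.inr (i, w)) (Sum.inr (i, w')) :=
            ⟨rfl, hA⟩
          exact ⟨.cons hadj .nil, by simp [D, hw, hA]⟩
        · have h1 : (corona (pathGraph n) H).Adj (Sum.inr (i, w)) (Sum.inl i) := rfl
          have h2 : (corona (pathGraph n) H).Adj (Sum.inl i) (Sum.inr (i, w')) := rfl
          exact ⟨.cons h1 (.cons h2 .nil), by simp [D, hw, hA]⟩
    · obtain ⟨p, hp⟩ := exists_walk_inl H _ i j rfl
      have h1 : (corona (pathGraph n) H).Adj (Sum.inr (i, w)) (Sum.inl i) := rfl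
      have h2 : (corona (pathGraph n) H).Adj (Sum.inl j) (Sum.inr (j, w')) := rfl
      exact ⟨.cons h1 (p.concat h2), by simp [D, hij, hp]⟩

lemma D_self {n : ℕ} (H : SimpleGraph W) (x : Fin n ⊕ Fin n × W) : D H x x = 0 := by
  obtain (a | ⟨i, w⟩) := x <;> simp [D, Nat.dist]

lemma D_le_of_adj {n : ℕ} (H : SimpleGraph W) {x z : Fin n ⊕ Fin n × W}
    (h : (corona (pathGraph n) H).Adj x z) (y : Fin n ⊕ Fin n × W) :
    D H x y ≤ D H z y + 1 := by
  classical
  obtain (a | ⟨i, w⟩) := x <;> obtain (b | ⟨i', w₂⟩) := z <;>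
    obtain (c | ⟨j, w'⟩) := y
  · have h' : (pathGraph n).Adj a b := h
    rw [pathGraph_adj] at h'
    simp only [D, Nat.dist]; omega
  · have h' : (pathGraph n).Adj a b := h
    rw [pathGraph_adj] at h'
    simp only [D, Nat.dist]; omega
  · have h' : a = i' := h
    subst h'
    simp only [D, Nat.dist]; omega
  · have h' : a = i' := h
    subst h'
    simp only [D]
    split_ifs <;> simp_all [Nat.dist] <;> omega
  · have h' : b = i := h
    subst h'
    simp only [D, Nat.dist]; omega
  · have h' : b = i := h
    subst h'
    simp only [D]
    split_ifs <;> simp_all [Nat.dist] <;> omega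
  · obtain ⟨h1, h2⟩ := (show i = i' ∧ H.Adj w w₂ from h)
    subst h1
    simp only [D, Nat.dist]; omega
  · obtain ⟨h1, h2⟩ := (show i = i' ∧ H.Adj w w₂ from h)
    subst h1
    simp only [D]
    by_cases hij : i.val = j.val
    · simp only [hij, if_true]
      by_cases e2 : w₂ = w'
      · subst e2
        simp only [if_pos rfl]
        by_cases e1 : w = w₂
        · simp [e1]
        · simp [e1, h2]
      · have hz : (1:ℕ) ≤ (if w₂ = w' then 0 else if H.Adj w₂ w' then 1 else 2) := by
          rw [if_neg e2]; split_ifs <;> omega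
        have hx : (if w = w' then (0:ℕ) else if H.Adj w w' then 1 else 2) ≤ 2 := by
          split_ifs <;> omega
        omega
    · simp [hij]
  
lemma D_le_length {n : ℕ} (H : SimpleGraph W) {x y : Fin n ⊕ Fin n × W}
    (p : (corona (pathGraph n) H).Walk x y) : D H x y ≤ p.length := by
  induction p with
  | nil => simp [D_self]
  | cons h q ih =>
    rw [SimpleGraph.Walk.length_cons]
    calc D H _ _ ≤ D H _ _ + 1 := D_le_of_adj H h _
    _ ≤ q.length + 1 := by omega

lemma dist_eq_D {n : ℕ} (H : SimpleGraph W) (x y : Fin n ⊕ Fin n × W) :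
    (corona (pathGraph n) H).dist x y = D H x y := by
  obtain ⟨p, hp⟩ := exists_walk_D H x y
  refine le_antisymm (hp ▸ SimpleGraph.dist_le p) ?_
  obtain ⟨q, hq⟩ := SimpleGraph.Reachable.exists_walk_length_eq_dist (G := corona (pathGraph n) H) ⟨p⟩
  exact hq ▸ D_le_length H q

lemma dist_inl_inl {n : ℕ} (H : SimpleGraph W) (i j : Fin n) :
    (corona (pathGraph n) H).dist (Sum.inl i) (Sum.inl j) = Nat.dist i.val j.val :=
  dist_eq_D H _ _

lemma dist_inl_inr {n : ℕ} (H : SimpleGraph W) (i : Fin n) (p : Fin n × W) :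
    (corona (pathGraph n) H).dist (Sum.inl i) (Sum.inr p) = Nat.dist i.val p.1.val + 1 :=
  dist_eq_D H _ _

lemma dist_inr_inl {n : ℕ} (H : SimpleGraph W) (p : Fin n × W) (i : Fin n) :
    (corona (pathGraph n) H).dist (Sum.inr p) (Sum.inl i) = Nat.dist p.1.val i.val + 1 :=
  dist_eq_D H _ _

lemma dist_inr_inr_ne {n : ℕ} (H : SimpleGraph W) (p q : Fin n × W)
    (h : p.1.val ≠ q.1.val) :
    (corona (pathGraph n) H).dist (Sum.inr p) (Sum.inr q) = Nat.dist p.1.val q.1.val + 2 := by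
  rw [dist_eq_D]
  simp [D, h]

lemma dist_inr_inr_same_le {n : ℕ} (H : SimpleGraph W) (p q : Fin n × W)
    (h : p.1.val = q.1.val) :
    (corona (pathGraph n) H).dist (Sum.inr p) (Sum.inr q) ≤ 2 := by
  rw [dist_eq_D]
  simp only [D, h, if_pos rfl]
  split_ifs <;> omega

lemma nat_dist_parity (a b : ℕ) : Nat.dist a b % 2 = (a + b) % 2 := by
  simp [Nat.dist]; omega

lemma card_filter_range : ∀ (n r : ℕ), r < 2 →
    ((Finset.range n).filter (fun x => x % 2 = r)).card = (n + 1 - r) / 2 := by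
  intro n
  induction n with
  | zero => intro r hr; interval_cases r <;> simp
  | succ n ih =>
    intro r hr
    rw [Finset.range_add_one, Finset.filter_insert]
    by_cases h : n % 2 = r
    · rw [if_pos h, Finset.card_insert_of_notMem (by simp), ih r hr]
      omega
    · rw [if_neg h, ih r hr]
      omega

lemma card_filter_fin (n r : ℕ) (hr : r < 2) :
    ((Finset.univ : Finset (Fin n)).filter (fun i => i.val % 2 = r)).card = (n + 1 - r) / 2 := by
  rw [← card_filter_range n r hr]
  apply Finset.card_nbij (fun i => i.val)
  · intro a ha
    simp only [Finset.mem_coe, Finset.mem_filter, Finset.mem_univ, true_and] at ha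
    simp only [Finset.mem_coe, Finset.mem_filter, Finset.mem_range]
    exact ⟨a.isLt, ha⟩
  · intro a _ b _ h
    exact Fin.ext h
  · intro b hb
    simp only [Finset.coe_filter, Finset.mem_range, Set.mem_setOf_eq] at hb
    refine ⟨⟨b, hb.1⟩, ?_, rfl⟩
    simp [hb.2]

/-- The optimal distance-equalizer set: path vertices at even positions,
whole copies of `H` at odd positions. -/
def upperF (n : ℕ) (W : Type v) [Fintype W] [DecidableEq W] : Finset (Fin n ⊕ Fin n × W) :=
  ((Finset.univ.filter fun i : Fin n => i.val % 2 = 0).image Sum.inl) ∪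
  (((Finset.univ.filter fun i : Fin n => i.val % 2 = 1) ×ˢ Finset.univ).image Sum.inr)

lemma inl_mem_upperF [DecidableEq W] {n : ℕ} (i : Fin n) :
    Sum.inl i ∈ upperF n W ↔ i.val % 2 = 0 := by
  simp [upperF]

lemma inr_mem_upperF [DecidableEq W] {n : ℕ} (p : Fin n × W) :
    Sum.inr p ∈ upperF n W ↔ p.1.val % 2 = 1 := by
  constructor
  · intro h
    simp only [upperF, Finset.mem_union, Finset.mem_image] at h
    rcases h with ⟨a, _, hc⟩ | ⟨a, ha, hc⟩
    · exact absurd hc (by simp)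
    · obtain rfl : a = p := Sum.inr_injective hc
      simp only [Finset.mem_product, Finset.mem_filter] at ha
      exact ha.1.2
  · intro h
    simp only [upperF, Finset.mem_union, Finset.mem_image]
    exact Or.inr ⟨p, by simp [h], rfl⟩

lemma card_upperF [DecidableEq W] (n : ℕ) :
    (upperF n W).card = (n / 2) * Fintype.card W + (n + 1) / 2 := by
  classical
  rw [upperF, Finset.card_union_of_disjoint, Finset.card_image_of_injective _ Sum.inl_injective,
    Finset.card_image_of_injective _ Sum.inr_injective, Finset.card_product,
    Finset.card_univ, card_filter_fin n 0 (by omega), card_filter_fin n 1 (by omega)]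
  · simp only [Nat.sub_zero, Nat.add_sub_cancel]
    ring
  · simp only [Finset.disjoint_left, Finset.mem_image]
    rintro x ⟨a, _, rfl⟩ ⟨b, _, h⟩
    exact absurd h (by simp)

lemma mixed_pair [DecidableEq W] [Nonempty W] {n : ℕ} (H : SimpleGraph W)
    (i : Fin n) (p : Fin n × W) (hi : i.val % 2 = 1) (hp : p.1.val % 2 = 0) :
    ∃ w ∈ (upperF n W : Set (Fin n ⊕ Fin n × W)),
      (corona (pathGraph n) H).dist w (Sum.inl i) = (corona (pathGraph n) H).dist w (Sum.inr p) := by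
  have hi' := i.isLt
  have hp' := p.1.isLt
  obtain ⟨k, hkn, hkd⟩ : ∃ k, k < n ∧ Nat.dist k i.val = Nat.dist k p.1.val + 1 := by
    rcases Nat.lt_or_ge i.val p.1.val with h | h
    · exact ⟨(i.val + p.1.val + 1) / 2, by omega, by simp [Nat.dist]; omega⟩
    · have h' : p.1.val < i.val := by omega
      exact ⟨(i.val + p.1.val - 1) / 2, by omega, by simp [Nat.dist]; omega⟩
  by_cases hk : k % 2 = 0
  · refine ⟨Sum.inl ⟨k, hkn⟩, ?_, ?_⟩
    · simpa [inl_mem_upperF] using hk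
    · rw [dist_inl_inl, dist_inl_inr]
      exact hkd
  · refine ⟨Sum.inr (⟨k, hkn⟩, Classical.arbitrary W), ?_, ?_⟩
    · simp only [Finset.mem_coe, inr_mem_upperF]
      omega
    · rw [dist_inr_inl, dist_inr_inr_ne H _ _ (by simp; omega)]
      simpa using by omega

lemma upper_isDistEq [DecidableEq W] [Nonempty W] {n : ℕ} (H : SimpleGraph W) :
    IsDistEqSet (corona (pathGraph n) H) ↑(upperF n W) := by
  intro x y hx hy hxy
  obtain (i | p) := x <;> obtain (j | q) := y
  · -- both path vertices, odd positions
    have hi : i.val % 2 = 1 := by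
      have := (inl_mem_upperF (W := W) i).not.mp (by simpa using hx); omega
    have hj : j.val % 2 = 1 := by
      have := (inl_mem_upperF (W := W) j).not.mp (by simpa using hy); omega
    have hi' := i.isLt; have hj' := j.isLt
    set m : ℕ := (i.val + j.val) / 2 with hm
    have hmn : m < n := by omega
    have hd : Nat.dist m i.val = Nat.dist m j.val := by simp [Nat.dist]; omega
    by_cases hk : m % 2 = 0
    · exact ⟨Sum.inl ⟨m, hmn⟩, by simpa [inl_mem_upperF] using hk,
        by rw [dist_inl_inl, dist_inl_inl]; exact hd⟩
    · refine ⟨Sum.inr (⟨m, hmn⟩, Classical.arbitrary W), ?_, ?_⟩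
      · simp only [Finset.mem_coe, inr_mem_upperF]; omega
      · rw [dist_inr_inl, dist_inr_inl]
        simp only [Fin.val_mk]
        omega
  · -- path vertex and copy vertex
    have hi : i.val % 2 = 1 := by
      have := (inl_mem_upperF (W := W) i).not.mp (by simpa using hx); omega
    have hq : q.1.val % 2 = 0 := by
      have := (inr_mem_upperF (W := W) q).not.mp (by simpa using hy); omega
    exact mixed_pair H i q hi hq
  · have hj : j.val % 2 = 1 := by
      have := (inl_mem_upperF (W := W) j).not.mp (by simpa using hy); omega
    have hp : p.1.val % 2 = 0 := by
      have := (inr_mem_upperF (W := W) p).not.mp (by simpa using hx); omega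
    obtain ⟨w, hw, he⟩ := mixed_pair H j p hj hp
    exact ⟨w, hw, he.symm⟩
  · -- two copy vertices, even positions
    have hp : p.1.val % 2 = 0 := by
      have := (inr_mem_upperF (W := W) p).not.mp (by simpa using hx); omega
    have hq : q.1.val % 2 = 0 := by
      have := (inr_mem_upperF (W := W) q).not.mp (by simpa using hy); omega
    have hp' := p.1.isLt; have hq' := q.1.isLt
    by_cases hpq : p.1.val = q.1.val
    · refine ⟨Sum.inl p.1, by simpa [inl_mem_upperF] using hp, ?_⟩
      rw [dist_inl_inr, dist_inl_inr]
      simp [Nat.dist]; omega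
    · set m : ℕ := (p.1.val + q.1.val) / 2 with hm
      have hmn : m < n := by omega
      have hd : Nat.dist m p.1.val = Nat.dist m q.1.val := by simp [Nat.dist]; omega
      by_cases hk : m % 2 = 0
      · refine ⟨Sum.inl ⟨m, hmn⟩, by simpa [inl_mem_upperF] using hk, ?_⟩
        rw [dist_inl_inr, dist_inl_inr]
        simp only [Fin.val_mk]
        omega
      · refine ⟨Sum.inr (⟨m, hmn⟩, Classical.arbitrary W), ?_, ?_⟩
        · simp only [Finset.mem_coe, inr_mem_upperF]; omega
        · rw [dist_inr_inr_ne H _ _ (by simp; omega), dist_inr_inr_ne H _ _ (by simp; omega)]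
          simp only [Fin.val_mk]
          omega

section Lower

variable {n : ℕ} {H : SimpleGraph W} {S : Set (Fin n ⊕ Fin n × W)}

lemma dist_inl_inr' (i j : Fin n) (w : W) :
    (corona (pathGraph n) H).dist (Sum.inl i) (Sum.inr (j, w)) = Nat.dist i.val j.val + 1 :=
  dist_inl_inr H i (j, w)

lemma dist_inr_inl' (i : Fin n) (w : W) (j : Fin n) :
    (corona (pathGraph n) H).dist (Sum.inr (i, w)) (Sum.inl j) = Nat.dist i.val j.val + 1 :=
  dist_inr_inl H (i, w) j

lemma dist_inr_inr_ne' (i j : Fin n) (w w' : W) (h : i.val ≠ j.val) :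
    (corona (pathGraph n) H).dist (Sum.inr (i, w)) (Sum.inr (j, w'))
      = Nat.dist i.val j.val + 2 :=
  dist_inr_inr_ne H (i, w) (j, w') h

lemma dist_inr_inr_same_le' (i j : Fin n) (w w' : W) (h : i.val = j.val) :
    (corona (pathGraph n) H).dist (Sum.inr (i, w)) (Sum.inr (j, w')) ≤ 2 :=
  dist_inr_inr_same_le H (i, w) (j, w') h

lemma constraint1 (hS : IsDistEqSet (corona (pathGraph n) H) S)
    {i j : Fin n} (hpar : i.val % 2 ≠ j.val % 2) :
    Sum.inl i ∈ S ∨ Sum.inl j ∈ S := by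
  by_contra hc
  push_neg at hc
  have hne : (Sum.inl i : Fin n ⊕ Fin n × W) ≠ Sum.inl j := by
    intro h
    rw [Sum.inl.injEq] at h
    exact hpar (by rw [h])
  obtain ⟨z, _, hz⟩ := hS hc.1 hc.2 hne
  obtain (k | p) := z
  · rw [dist_inl_inl, dist_inl_inl] at hz
    have := nat_dist_parity k.val i.val
    have := nat_dist_parity k.val j.val
    omega
  · rw [dist_inr_inl, dist_inr_inl] at hz
    have := nat_dist_parity p.1.val i.val
    have := nat_dist_parity p.1.val j.val
    omega

lemma constraint2 (hS : IsDistEqSet (corona (pathGraph n) H) S)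
    {i j : Fin n} (hpar : i.val % 2 ≠ j.val % 2) (w w' : W) :
    Sum.inr (i, w) ∈ S ∨ Sum.inr (j, w') ∈ S := by
  by_contra hc
  push_neg at hc
  have hne : (Sum.inr (i, w) : Fin n ⊕ Fin n × W) ≠ Sum.inr (j, w') := by
    intro h
    rw [Sum.inr.injEq, Prod.mk.injEq] at h
    exact hpar (by rw [h.1])
  obtain ⟨z, _, hz⟩ := hS hc.1 hc.2 hne
  obtain (k | ⟨l, u⟩) := z
  · rw [dist_inl_inr', dist_inl_inr'] at hz
    have := nat_dist_parity k.val i.val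
    have := nat_dist_parity k.val j.val
    omega
  · by_cases h1 : l.val = i.val
    · have h2 : l.val ≠ j.val := by omega
      rw [dist_inr_inr_ne' l j u w' h2] at hz
      have hle := dist_inr_inr_same_le' (H := H) l i u w h1
      have := nat_dist_parity l.val j.val
      omega
    · by_cases h2 : l.val = j.val
      · rw [dist_inr_inr_ne' l i u w h1] at hz
        have hle := dist_inr_inr_same_le' (H := H) l j u w' h2
        have := nat_dist_parity l.val i.val
        omega
      · rw [dist_inr_inr_ne' l i u w h1, dist_inr_inr_ne' l j u w' h2] at hz
        have := nat_dist_parity l.val i.val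
        have := nat_dist_parity l.val j.val
        omega

lemma constraint3 (hS : IsDistEqSet (corona (pathGraph n) H) S)
    {i j : Fin n} (hpar : i.val % 2 = j.val % 2) (hij : i.val ≠ j.val) (w : W) :
    Sum.inl i ∈ S ∨ Sum.inr (j, w) ∈ S := by
  by_contra hc
  push_neg at hc
  obtain ⟨z, _, hz⟩ := hS hc.1 hc.2 (by simp)
  obtain (k | ⟨l, u⟩) := z
  · rw [dist_inl_inl, dist_inl_inr'] at hz
    have := nat_dist_parity k.val i.val
    have := nat_dist_parity k.val j.val
    omega
  · by_cases h1 : l.val = j.val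
    · rw [dist_inr_inl'] at hz
      have hle := dist_inr_inr_same_le' (H := H) l j u w h1
      have := nat_dist_parity l.val i.val
      have hu : Nat.dist l.val i.val = l.val - i.val + (i.val - l.val) := rfl
      omega
    · rw [dist_inr_inl', dist_inr_inr_ne' l j u w h1] at hz
      have := nat_dist_parity l.val i.val
      have := nat_dist_parity l.val j.val
      omega

open scoped Classical in
lemma ncard_decomp (S : Set (Fin n ⊕ Fin n × W)) :
    S.ncard = (Finset.univ.filter (fun i : Fin n => Sum.inl i ∈ S)).card
      + ∑ i : Fin n, (Finset.univ.filter (fun w : W => Sum.inr (i, w) ∈ S)).card := by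
  classical
  have hfin : S.Finite := S.toFinite
  rw [Set.ncard_eq_toFinset_card S hfin]
  have h1 : hfin.toFinset = ((Finset.univ.filter (fun i : Fin n => Sum.inl i ∈ S)).image Sum.inl)
      ∪ ((Finset.univ.filter (fun p : Fin n × W => Sum.inr p ∈ S)).image Sum.inr) := by
    ext x
    obtain (i | p) := x <;> simp
  rw [h1, Finset.card_union_of_disjoint, Finset.card_image_of_injective _ Sum.inl_injective,
      Finset.card_image_of_injective _ Sum.inr_injective]
  · congr 1
    rw [Finset.card_eq_sum_card_fiberwise (f := Prod.fst) (t := Finset.univ)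
      (fun x _ => Finset.mem_univ _)]
    apply Finset.sum_congr rfl
    intro i _
    have h2 : ((Finset.univ.filter (fun p : Fin n × W => Sum.inr p ∈ S)).filter
          (fun p => p.1 = i))
        = (Finset.univ.filter (fun w : W => Sum.inr (i, w) ∈ S)).image (fun w => (i, w)) := by
      ext ⟨a, b⟩
      simp only [Finset.mem_filter, Finset.mem_univ, true_and, Finset.mem_image]
      constructor
      · rintro ⟨h3, rfl⟩
        exact ⟨b, h3, rfl⟩
      · rintro ⟨w, hw, he⟩
        rw [Prod.mk.injEq] at he
        obtain ⟨rfl, rfl⟩ := he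
        exact ⟨hw, rfl⟩
    rw [h2, Finset.card_image_of_injective _ (fun a b h => by simpa using h)]
  · simp only [Finset.disjoint_left, Finset.mem_image]
    rintro x ⟨a, _, rfl⟩ ⟨b, _, h⟩
    exact absurd h (by simp)

open scoped Classical in
lemma lower_bound [Nonempty W] {n : ℕ} (hn : 2 ≤ n) (H : SimpleGraph W)
    (S : Set (Fin n ⊕ Fin n × W)) (hS : IsDistEqSet (corona (pathGraph n) H) S) :
    (n / 2) * Fintype.card W + (n + 1) / 2 ≤ S.ncard := by
  have hm1 : 1 ≤ Fintype.card W := Fintype.card_pos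
  set m := Fintype.card W with hm
  set P : Finset (Fin n) := Finset.univ.filter (fun i => Sum.inl i ∈ S) with hP
  set Cw : Fin n → Finset W :=
    fun i => Finset.univ.filter (fun w => Sum.inr (i, w) ∈ S) with hCw
  set E : Finset (Fin n) := Finset.univ.filter (fun i => i.val % 2 = 0) with hE
  set O : Finset (Fin n) := Finset.univ.filter (fun i => i.val % 2 = 1) with hO
  have hdecomp : S.ncard = P.card + ∑ i : Fin n, (Cw i).card := ncard_decomp S
  have hEcard : E.card = (n + 1) / 2 := by simpa using card_filter_fin n 0 (by omega)
  have hOcard : O.card = n / 2 := by simpa using card_filter_fin n 1 (by omega)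
  have hsplit : ∑ i : Fin n, (Cw i).card
      = (∑ i ∈ E, (Cw i).card) + ∑ i ∈ O, (Cw i).card := by
    rw [← Finset.sum_filter_add_sum_filter_not Finset.univ (fun i : Fin n => i.val % 2 = 0)]
    congr 1
    apply Finset.sum_congr _ (fun _ _ => rfl)
    apply Finset.filter_congr
    intro i _
    constructor <;> (intro h; omega)
  have hPcases : (∀ i : Fin n, i.val % 2 = 0 → i ∈ P) ∨ (∀ i : Fin n, i.val % 2 = 1 → i ∈ P) := by
    by_contra hc
    push_neg at hc
    obtain ⟨⟨i, hi0, hiP⟩, ⟨j, hj1, hjP⟩⟩ := hc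
    have hcon := constraint1 hS (i := i) (j := j) (by omega)
    simp only [hP, Finset.mem_filter, Finset.mem_univ, true_and] at hiP hjP
    tauto
  have hCcases : (∀ i : Fin n, i.val % 2 = 0 → Cw i = Finset.univ)
      ∨ (∀ i : Fin n, i.val % 2 = 1 → Cw i = Finset.univ) := by
    by_contra hc
    push_neg at hc
    obtain ⟨⟨i, hi0, hiC⟩, ⟨j, hj1, hjC⟩⟩ := hc
    obtain ⟨w, hw⟩ : ∃ w, w ∉ Cw i := by
      by_contra hall
      push_neg at hall
      exact hiC (Finset.eq_univ_iff_forall.mpr hall)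
    obtain ⟨w', hw'⟩ : ∃ w', w' ∉ Cw j := by
      by_contra hall
      push_neg at hall
      exact hjC (Finset.eq_univ_iff_forall.mpr hall)
    have hcon := constraint2 hS (i := i) (j := j) (by omega) w w'
    simp only [hCw, Finset.mem_filter, Finset.mem_univ, true_and] at hw hw'
    tauto
  have hPbE : (∀ i : Fin n, i.val % 2 = 0 → i ∈ P) → (n + 1) / 2 ≤ P.card := by
    intro h
    rw [← hEcard]
    apply Finset.card_le_card
    intro i hi
    simp only [hE, Finset.mem_filter, Finset.mem_univ, true_and] at hi
    exact h i hi
  have hPbO : (∀ i : Fin n, i.val % 2 = 1 → i ∈ P) → n / 2 ≤ P.card := by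
    intro h
    rw [← hOcard]
    apply Finset.card_le_card
    intro i hi
    simp only [hO, Finset.mem_filter, Finset.mem_univ, true_and] at hi
    exact h i hi
  have hPb : n / 2 ≤ P.card := by
    rcases hPcases with h | h
    · have := hPbE h; omega
    · exact hPbO h
  rcases hCcases with hCE | hCO
  · -- all copies at even positions are fully contained in S
    have hsumE : ∑ i ∈ E, (Cw i).card = ((n + 1) / 2) * m := by
      have hall : ∀ i ∈ E, (Cw i).card = m := by
        intro i hi
        simp only [hE, Finset.mem_filter, Finset.mem_univ, true_and] at hi
        rw [hCE i hi, Finset.card_univ]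
      rw [Finset.sum_congr rfl hall, Finset.sum_const, smul_eq_mul, hEcard]
    have key : (n + 1) / 2 * m = n / 2 * m + n % 2 * m := by
      rw [← Nat.add_mul]
      congr 1
      omega
    have h9 : n % 2 * 1 ≤ n % 2 * m := Nat.mul_le_mul_left _ hm1
    omega
  · -- all copies at odd positions are fully contained in S
    have hsumO : ∑ i ∈ O, (Cw i).card = (n / 2) * m := by
      have hall : ∀ i ∈ O, (Cw i).card = m := by
        intro i hi
        simp only [hO, Finset.mem_filter, Finset.mem_univ, true_and] at hi
        rw [hCO i hi, Finset.card_univ]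
      rw [Finset.sum_congr rfl hall, Finset.sum_const, smul_eq_mul, hOcard]
    have hgoal : (n + 1) / 2 ≤ P.card + ∑ i ∈ E, (Cw i).card := by
      rcases hPcases with hPE | hPO
      · have := hPbE hPE; omega
      · by_cases hex : ∃ i : Fin n, i.val % 2 = 0 ∧ i ∈ P
        · obtain ⟨i, hi0, hiP⟩ := hex
          have hsub : insert i O ⊆ P := by
            apply Finset.insert_subset hiP
            intro j hj
            simp only [hO, Finset.mem_filter, Finset.mem_univ, true_and] at hj
            exact hPO j hj
          have hcard : (insert i O).card = n / 2 + 1 := by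
            rw [Finset.card_insert_of_notMem, hOcard]
            simp only [hO, Finset.mem_filter, Finset.mem_univ, true_and]
            omega
          have := Finset.card_le_card hsub
          omega
        · push_neg at hex
          by_cases hpar : n % 2 = 0
          · omega
          · have h3 : 3 ≤ n := by omega
            set i0 : Fin n := ⟨0, by omega⟩ with hi0
            set i2 : Fin n := ⟨2, by omega⟩ with hi2
            have hi0P : i0 ∉ P := hex i0 rfl
            have hi0S : Sum.inl i0 ∉ S := by
              simp only [hP, Finset.mem_filter, Finset.mem_univ, true_and] at hi0P
              exact hi0P
            have hCw2 : Cw i2 = Finset.univ := by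
              apply Finset.eq_univ_iff_forall.mpr
              intro w
              rcases constraint3 hS (i := i0) (j := i2) (by simp [hi0, hi2])
                  (by simp [hi0, hi2]) w with h | h
              · exact absurd h hi0S
              · simp only [hCw, Finset.mem_filter, Finset.mem_univ, true_and]
                exact h
            have hmemE : i2 ∈ E := by
              simp only [hE, Finset.mem_filter, Finset.mem_univ, true_and, hi2]
            have hsum1 : m ≤ ∑ i ∈ E, (Cw i).card := by
              calc m = (Cw i2).card := by rw [hCw2, Finset.card_univ]
              _ ≤ _ := Finset.single_le_sum (f := fun i => (Cw i).card)
                  (fun _ _ => Nat.zero_le _) hmemE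
            omega
    omega

end Lower

theorem main {W : Type v} [Fintype W] [Nonempty W]
    (n : ℕ) (hn : 2 ≤ n) (H : SimpleGraph W) :
    eqdim (corona (SimpleGraph.pathGraph n) H) =
      (n / 2) * Fintype.card W + (n + 1) / 2 := by
  classical
  have hmem : (n / 2) * Fintype.card W + (n + 1) / 2 ∈
      {k | ∃ S : Set (Fin n ⊕ Fin n × W),
        IsDistEqSet (corona (pathGraph n) H) S ∧ S.ncard = k} :=
    ⟨↑(upperF n W), upper_isDistEq H, by rw [Set.ncard_coe_finset, card_upperF]⟩
  rw [eqdim]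
  refine le_antisymm (Nat.sInf_le hmem) (le_csInf ⟨_, hmem⟩ ?_)
  rintro k ⟨S, hS, rfl⟩
  exact lower_bound hn H S hS

end EqdimCoronaPath
/-- For `n ≥ 2`, `ξ(Pₙ ⊙ H) = ⌊n/2⌋·n(H) + ⌈n/2⌉`. -/
theorem eqdim_path_corona {W : Type v} [Fintype W] [Nonempty W]
    (n : ℕ) (hn : 2 ≤ n) (H : SimpleGraph W) :
    eqdim (corona (SimpleGraph.pathGraph n) H) =
      (n / 2) * Fintype.card W + (n + 1) / 2 :=
  EqdimCoronaPath.main n hn H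
end

section
/- Let G be a finite simple graph of order n(G) ≥ 2 with maximum degree Δ(G) = n(G) − 1 (so G has a universal vertex and is connected), and let H be any finite simple graph. Then ξ(G⊙H) = n(G) if the minimum degree δ(G) ≥ 2, and ξ(G⊙H) = n(H) + n(G) − 1 if δ(G) = 1. -/
universe u v

variable {V : Type u} {W : Type v}

open Classical in
/-- distance formula for a graph with a universal vertex -/
noncomputable def Dfun (G : SimpleGraph V) (a b : V) : ℕ :=
  if a = b then 0 else if G.Adj a b then 1 else 2

lemma Dfun_self (G : SimpleGraph V) (a : V) : Dfun G a a = 0 := by simp [Dfun]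

lemma Dfun_le_two (G : SimpleGraph V) (a b : V) : Dfun G a b ≤ 2 := by
  unfold Dfun; split <;> [omega; (split <;> omega)]

lemma Dfun_adj (G : SimpleGraph V) {a b : V} (h : G.Adj a b) : Dfun G a b = 1 := by
  simp [Dfun, h, h.ne]

lemma Dfun_eq_zero_iff (G : SimpleGraph V) {a b : V} : Dfun G a b = 0 ↔ a = b := by
  unfold Dfun
  split
  · simp_all
  · split <;> simp_all

lemma Dfun_not_adj (G : SimpleGraph V) {a b : V} (hne : a ≠ b) (h : ¬ G.Adj a b) :
    Dfun G a b = 2 := by simp [Dfun, hne, h]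

lemma Dfun_lip (G : SimpleGraph V) {a b : V} (c : V) (h : G.Adj a b) :
    Dfun G c b ≤ Dfun G c a + 1 := by
  by_cases hca : c = a
  · subst hca; rw [Dfun_adj G h, Dfun_self]
  · have h1 : 1 ≤ Dfun G c a := by
      rcases Nat.eq_zero_or_pos (Dfun G c a) with h0 | h0
      · exact absurd ((Dfun_eq_zero_iff G).mp h0) hca
      · omega
    have := Dfun_le_two G c b
    omega

open Classical in
noncomputable def Ffun (G : SimpleGraph V) (H : SimpleGraph W) :
    (V ⊕ V × W) → (V ⊕ V × W) → ℕ
  | Sum.inl a, Sum.inl b => Dfun G a b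
  | Sum.inl a, Sum.inr q => Dfun G a q.1 + 1
  | Sum.inr p, Sum.inl b => Dfun G p.1 b + 1
  | Sum.inr p, Sum.inr q =>
      if p.1 = q.1 then Dfun H p.2 q.2 else Dfun G p.1 q.1 + 2

lemma Ffun_inl_inl (G : SimpleGraph V) (H : SimpleGraph W) (a b : V) :
    Ffun G H (Sum.inl a) (Sum.inl b) = Dfun G a b := rfl

lemma Ffun_inl_inr (G : SimpleGraph V) (H : SimpleGraph W) (a j : V) (w : W) :
    Ffun G H (Sum.inl a) (Sum.inr (j, w)) = Dfun G a j + 1 := rfl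

lemma Ffun_inr_inl (G : SimpleGraph V) (H : SimpleGraph W) (i b : V) (w : W) :
    Ffun G H (Sum.inr (i, w)) (Sum.inl b) = Dfun G i b + 1 := rfl

open Classical in
lemma Ffun_inr_inr (G : SimpleGraph V) (H : SimpleGraph W) (i j : V) (w w' : W) :
    Ffun G H (Sum.inr (i, w)) (Sum.inr (j, w')) =
      if i = j then Dfun H w w' else Dfun G i j + 2 := by
  show (if i = j then _ else _) = _
  congr 1

lemma Ffun_inr_inr_same (G : SimpleGraph V) (H : SimpleGraph W) (i : V) (w w' : W) :
    Ffun G H (Sum.inr (i, w)) (Sum.inr (i, w')) = Dfun H w w' := by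
  rw [Ffun_inr_inr, if_pos rfl]

lemma Ffun_inr_inr_ne (G : SimpleGraph V) (H : SimpleGraph W) {i j : V} (hij : i ≠ j)
    (w w' : W) :
    Ffun G H (Sum.inr (i, w)) (Sum.inr (j, w')) = Dfun G i j + 2 := by
  rw [Ffun_inr_inr, if_neg hij]

lemma Ffun_self (G : SimpleGraph V) (H : SimpleGraph W) (x : V ⊕ V × W) :
    Ffun G H x x = 0 := by
  rcases x with a | ⟨i, w⟩
  · rw [Ffun_inl_inl, Dfun_self]
  · rw [Ffun_inr_inr_same, Dfun_self]

lemma Ffun_lip (G : SimpleGraph V) (H : SimpleGraph W) (x : V ⊕ V × W)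
    {y z : V ⊕ V × W} (h : (corona G H).Adj y z) :
    Ffun G H x z ≤ Ffun G H x y + 1 := by
  rcases x with c | ⟨c, cw⟩ <;> rcases y with a | ⟨i, w⟩ <;> rcases z with b | ⟨j, w'⟩
  · exact Dfun_lip G c h
  · have ha : a = j := h
    subst ha
    rw [Ffun_inl_inr, Ffun_inl_inl]
  · have hb : b = i := h
    subst hb
    rw [Ffun_inl_inl, Ffun_inl_inr]
    omega
  · obtain ⟨h1, h2⟩ : i = j ∧ H.Adj w w' := h
    subst h1
    rw [Ffun_inl_inr, Ffun_inl_inr]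
    omega
  · rw [Ffun_inr_inl, Ffun_inr_inl]
    exact Nat.add_le_add_right (Dfun_lip G c h) 1
  · have ha : a = j := h
    subst ha
    rw [Ffun_inr_inl]
    by_cases hjc : c = a
    · subst hjc
      rw [Ffun_inr_inr_same]
      have := Dfun_le_two H cw w'
      have := Dfun_self G c
      omega
    · rw [Ffun_inr_inr_ne G H hjc]
  · have hb : b = i := h
    subst hb
    rw [Ffun_inr_inl]
    by_cases hic : c = b
    · subst hic
      rw [Ffun_inr_inr_same, Dfun_self]
      have := Dfun_le_two H cw w
      omega
    · rw [Ffun_inr_inr_ne G H hic]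
      omega
  · obtain ⟨h1, h2⟩ : i = j ∧ H.Adj w w' := h
    subst h1
    by_cases hic : c = i
    · subst hic
      rw [Ffun_inr_inr_same, Ffun_inr_inr_same]
      exact Dfun_lip H cw h2
    · rw [Ffun_inr_inr_ne G H hic, Ffun_inr_inr_ne G H hic]
      omega

lemma corona_adj_inl_inl {G : SimpleGraph V} {H : SimpleGraph W} {a b : V}
    (h : G.Adj a b) : (corona G H).Adj (Sum.inl a) (Sum.inl b) := h

lemma corona_adj_inl_inr (G : SimpleGraph V) (H : SimpleGraph W) (a : V) (w : W) :
    (corona G H).Adj (Sum.inl a) (Sum.inr (a, w)) := rfl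

lemma corona_adj_inr_inl (G : SimpleGraph V) (H : SimpleGraph W) (a : V) (w : W) :
    (corona G H).Adj (Sum.inr (a, w)) (Sum.inl a) := rfl

lemma corona_adj_inr_inr {G : SimpleGraph V} {H : SimpleGraph W} {w w' : W} (i : V)
    (h : H.Adj w w') : (corona G H).Adj (Sum.inr (i, w)) (Sum.inr (i, w')) := ⟨rfl, h⟩

lemma Ffun_le_length (G : SimpleGraph V) (H : SimpleGraph W) (x : V ⊕ V × W) :
    ∀ {y z : V ⊕ V × W} (p : (corona G H).Walk y z),
      Ffun G H x z ≤ Ffun G H x y + p.length := by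
  intro y z p
  induction p with
  | nil => simp
  | cons h q ih =>
    calc Ffun G H x _ ≤ Ffun G H x _ + q.length := ih
    _ ≤ (Ffun G H x _ + 1) + q.length := by
        exact Nat.add_le_add_right (Ffun_lip G H x h) _
    _ = Ffun G H x _ + (q.cons h).length := by
        rw [SimpleGraph.Walk.length_cons]; omega

section Universal

variable {G : SimpleGraph V} {H : SimpleGraph W} {u : V}

lemma walk_inl_inl (hu : ∀ a, a ≠ u → G.Adj u a) (a b : V) :
    ∃ p : (corona G H).Walk (Sum.inl a) (Sum.inl b), p.length ≤ Dfun G a b := by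
  by_cases hab : a = b
  · subst hab; exact ⟨.nil, by simp⟩
  by_cases hadj : G.Adj a b
  · exact ⟨.cons (corona_adj_inl_inl hadj) .nil, by simp [Dfun_adj G hadj]⟩
  have ha : a ≠ u := by
    rintro rfl; exact hadj (hu b (fun hb => hab hb.symm))
  have hb : b ≠ u := by
    rintro rfl; exact hadj (hu a ha).symm
  refine ⟨.cons (corona_adj_inl_inl (hu a ha).symm)
    (.cons (corona_adj_inl_inl (hu b hb)) .nil), ?_⟩
  rw [Dfun_not_adj G hab hadj]; simp

lemma dist_corona_eq (hu : ∀ a, a ≠ u → G.Adj u a) (x y : V ⊕ V × W) :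
    (corona G H).dist x y = Ffun G H x y := by
  have hup : ∃ p : (corona G H).Walk x y, p.length ≤ Ffun G H x y := by
    rcases x with a | ⟨i, w⟩ <;> rcases y with b | ⟨j, w'⟩
    · obtain ⟨p, hp⟩ := walk_inl_inl (H := H) hu a b
      exact ⟨p, by rwa [Ffun_inl_inl]⟩
    · obtain ⟨p, hp⟩ := walk_inl_inl (H := H) hu a j
      refine ⟨p.concat (corona_adj_inl_inr G H j w'), ?_⟩
      rw [SimpleGraph.Walk.length_concat, Ffun_inl_inr]
      omega
    · obtain ⟨p, hp⟩ := walk_inl_inl (H := H) hu i b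
      refine ⟨.cons (corona_adj_inr_inl G H i w) p, ?_⟩
      rw [SimpleGraph.Walk.length_cons, Ffun_inr_inl]
      omega
    · by_cases hij : i = j
      · subst hij
        rw [Ffun_inr_inr_same]
        by_cases hww : w = w'
        · subst hww; exact ⟨.nil, by simp⟩
        by_cases hadj : H.Adj w w'
        · exact ⟨.cons (corona_adj_inr_inr i hadj) .nil,
            by simp [Dfun_adj H hadj]⟩
        · refine ⟨.cons (corona_adj_inr_inl G H i w)
            (.cons (corona_adj_inl_inr G H i w') .nil), ?_⟩
          · rw [Dfun_not_adj H hww hadj]; simp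
      · obtain ⟨p, hp⟩ := walk_inl_inl (H := H) hu i j
        refine ⟨.cons (corona_adj_inr_inl G H i w)
          (p.concat (corona_adj_inl_inr G H j w')), ?_⟩
        rw [SimpleGraph.Walk.length_cons, SimpleGraph.Walk.length_concat,
          Ffun_inr_inr_ne G H hij]
        omega
  obtain ⟨p, hp⟩ := hup
  refine le_antisymm (le_trans (SimpleGraph.dist_le p) hp) ?_
  have hr : (corona G H).Reachable x y := ⟨p⟩
  obtain ⟨q, hq⟩ := hr.exists_walk_length_eq_dist
  calc Ffun G H x y ≤ Ffun G H x x + q.length := Ffun_le_length G H x q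
  _ = (corona G H).dist x y := by rw [Ffun_self, hq]; omega

end Universal

section Combinatorics

open Classical in
lemma cluster_meet [Nonempty W] {G : SimpleGraph V} {H : SimpleGraph W} {u : V}
    (hu : ∀ a, a ≠ u → G.Adj u a) {S : Set (V ⊕ V × W)}
    (hS : IsDistEqSet (corona G H) S) (i : V) :
    ∃ s ∈ S, Sum.elim id Prod.fst s = i := by
  obtain ⟨w₀⟩ := ‹Nonempty W›
  by_cases hx : (Sum.inl i : V ⊕ V × W) ∈ S
  · exact ⟨_, hx, rfl⟩
  by_cases hy : (Sum.inr (i, w₀) : V ⊕ V × W) ∈ S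
  · exact ⟨_, hy, rfl⟩
  obtain ⟨s, hs, hd⟩ := hS hx hy (by simp)
  rw [dist_corona_eq hu, dist_corona_eq hu] at hd
  rcases s with a | ⟨j, z⟩
  · rw [Ffun_inl_inl, Ffun_inl_inr] at hd
    omega
  · by_cases hji : j = i
    · exact ⟨_, hs, hji⟩
    · rw [Ffun_inr_inl, Ffun_inr_inr_ne G H hji] at hd
      omega

lemma ncard_inj_le {α : Type*} {β : Type*} [Fintype α] [Fintype β] {S : Set β}
    (f : α → β) (hinj : Function.Injective f) (hsub : ∀ a, f a ∈ S) :
    Fintype.card α ≤ S.ncard := by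
  classical
  have h1 : (Set.range f).ncard = Fintype.card α := by
    rw [← Set.image_univ, Set.ncard_image_of_injective _ hinj, Set.ncard_univ,
      Nat.card_eq_fintype_card]
  rw [← h1]
  exact Set.ncard_le_ncard (Set.range_subset_iff.mpr hsub) (Set.toFinite S)

lemma lower_n [Fintype V] [Fintype W] [Nonempty W] {G : SimpleGraph V}
    {H : SimpleGraph W} {u : V} (hu : ∀ a, a ≠ u → G.Adj u a)
    {S : Set (V ⊕ V × W)} (hS : IsDistEqSet (corona G H) S) :
    Fintype.card V ≤ S.ncard := by
  choose f hfS hfproj using fun i => cluster_meet hu hS i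
  exact ncard_inj_le f (fun i j h => by rw [← hfproj i, ← hfproj j, h]) hfS

lemma ncard_setOf_ne {α : Type*} [Fintype α] (t : α) :
    {i : α | i ≠ t}.ncard = Fintype.card α - 1 := by
  classical
  have h : {i : α | i ≠ t} = Set.univ \ {t} := by ext a; simp
  rw [h, Set.ncard_diff (by simp), Set.ncard_univ, Set.ncard_singleton,
    Nat.card_eq_fintype_card]

lemma ncard_fiber {α : Type*} {β : Type*} [Fintype β] (t : α) :
    {p : α × β | p.1 = t}.ncard = Fintype.card β := by
  classical
  have h : {p : α × β | p.1 = t} = (fun w : β => (t, w)) '' Set.univ := by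
    ext ⟨a, b⟩
    simp [Prod.ext_iff, eq_comm]
  rw [h, Set.ncard_image_of_injective _ (fun a b hab => congrArg Prod.snd hab),
    Set.ncard_univ, Nat.card_eq_fintype_card]

end Combinatorics

/-- If `G` has order at least 2 and a universal vertex
(`Δ(G) = n(G) − 1`), then `ξ(G ⊙ H) = n(G)` when `δ(G) ≥ 2`, and
`ξ(G ⊙ H) = n(H) + n(G) − 1` when `δ(G) = 1`. -/
theorem eqdim_corona_of_universal_vertex [Fintype V] [Fintype W] [Nonempty W]
    (G : SimpleGraph V) [DecidableRel G.Adj] (H : SimpleGraph W)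
    (hn : 2 ≤ Fintype.card V) (hDelta : G.maxDegree = Fintype.card V - 1) :
    (2 ≤ G.minDegree → eqdim (corona G H) = Fintype.card V) ∧
    (G.minDegree = 1 →
      eqdim (corona G H) = Fintype.card W + Fintype.card V - 1) := by
  classical
  have hNV : Nonempty V := Fintype.card_pos_iff.mp (by omega)
  obtain ⟨u, hu_deg⟩ := G.exists_maximal_degree_vertex
  rw [hDelta] at hu_deg
  have hu : ∀ a, a ≠ u → G.Adj u a := by
    have hsub : G.neighborFinset u ⊆ Finset.univ.erase u := by
      intro a ha
      rw [SimpleGraph.mem_neighborFinset] at ha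
      exact Finset.mem_erase.mpr ⟨ha.ne', Finset.mem_univ a⟩
    have hcard : (Finset.univ.erase u).card = Fintype.card V - 1 := by
      rw [Finset.card_erase_of_mem (Finset.mem_univ u), Finset.card_univ]
    have heq : G.neighborFinset u = Finset.univ.erase u :=
      Finset.eq_of_subset_of_card_le hsub
        (by rw [hcard, SimpleGraph.card_neighborFinset_eq_degree, ← hu_deg])
    intro a ha
    have : a ∈ G.neighborFinset u := by
      rw [heq]
      exact Finset.mem_erase.mpr ⟨ha, Finset.mem_univ a⟩
    rwa [SimpleGraph.mem_neighborFinset] at this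
  constructor
  · -- δ ≥ 2
    intro hmin
    have hdeg2 : ∀ a, 2 ≤ G.degree a := fun a => le_trans hmin (G.minDegree_le_degree a)
    set S1 : Set (V ⊕ V × W) := Set.range Sum.inl with hS1def
    have hS1 : IsDistEqSet (corona G H) S1 := by
      rintro x y hx hy hxy
      obtain ⟨i, w, rfl⟩ : ∃ i w, x = Sum.inr (i, w) := by
        rcases x with a | ⟨i, w⟩
        · exact absurd ⟨a, rfl⟩ hx
        · exact ⟨i, w, rfl⟩
      obtain ⟨j, w', rfl⟩ : ∃ j w', y = Sum.inr (j, w') := by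
        rcases y with a | ⟨j, w'⟩
        · exact absurd ⟨a, rfl⟩ hy
        · exact ⟨j, w', rfl⟩
      by_cases hij : i = j
      · subst hij
        refine ⟨Sum.inl i, ⟨i, rfl⟩, ?_⟩
        rw [dist_corona_eq hu, dist_corona_eq hu, Ffun_inl_inr, Ffun_inl_inr]
      · by_cases hiu : i = u
        · have hju : j ≠ u := fun h => hij (hiu.trans h.symm)
          obtain ⟨c, hc, hcu⟩ := Finset.exists_mem_ne
            (s := G.neighborFinset j)
            (by rw [SimpleGraph.card_neighborFinset_eq_degree]; have := hdeg2 j; omega) u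
          rw [SimpleGraph.mem_neighborFinset] at hc
          refine ⟨Sum.inl c, ⟨c, rfl⟩, ?_⟩
          rw [dist_corona_eq hu, dist_corona_eq hu, Ffun_inl_inr, Ffun_inl_inr,
            hiu, Dfun_adj G (hu c hcu).symm, Dfun_adj G hc.symm]
        · by_cases hju : j = u
          ·
            obtain ⟨c, hc, hcu⟩ := Finset.exists_mem_ne
              (s := G.neighborFinset i)
              (by rw [SimpleGraph.card_neighborFinset_eq_degree]; have := hdeg2 i; omega) u
            rw [SimpleGraph.mem_neighborFinset] at hc
            refine ⟨Sum.inl c, ⟨c, rfl⟩, ?_⟩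
            rw [dist_corona_eq hu, dist_corona_eq hu, Ffun_inl_inr, Ffun_inl_inr,
              hju, Dfun_adj G (hu c hcu).symm, Dfun_adj G hc.symm]
          · refine ⟨Sum.inl u, ⟨u, rfl⟩, ?_⟩
            rw [dist_corona_eq hu, dist_corona_eq hu, Ffun_inl_inr, Ffun_inl_inr,
              Dfun_adj G (hu i hiu), Dfun_adj G (hu j hju)]
    have hcard1 : S1.ncard = Fintype.card V := by
      rw [hS1def, ← Set.image_univ, Set.ncard_image_of_injective _ Sum.inl_injective,
        Set.ncard_univ, Nat.card_eq_fintype_card]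
    refine le_antisymm (Nat.sInf_le ⟨S1, hS1, hcard1⟩) ?_
    refine le_csInf ⟨_, S1, hS1, hcard1⟩ ?_
    rintro m ⟨S, hS, rfl⟩
    exact lower_n hu hS
  · -- δ = 1
    intro hmin1
    obtain ⟨v₀, hv₀⟩ := G.exists_minimal_degree_vertex
    rw [hmin1] at hv₀
    have hv₀ : G.degree v₀ = 1 := hv₀.symm
    obtain ⟨v, hvu, hleafv⟩ : ∃ v, v ≠ u ∧ ∀ a, G.Adj a v → a = u := by
      by_cases hvu : v₀ = u
      · rw [hvu] at hv₀
        have hn2 : Fintype.card V = 2 := by omega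
        obtain ⟨v, hv⟩ := Fintype.exists_ne_of_one_lt_card (by omega) u
        refine ⟨v, hv, fun a ha => ?_⟩
        have h1 : (Finset.univ.erase v).card = 1 := by
          rw [Finset.card_erase_of_mem (Finset.mem_univ v), Finset.card_univ, hn2]
        exact Finset.card_le_one.mp (le_of_eq h1) a
          (Finset.mem_erase.mpr ⟨ha.ne, Finset.mem_univ a⟩) u
          (Finset.mem_erase.mpr ⟨fun h => hv h.symm, Finset.mem_univ u⟩)
      · refine ⟨v₀, hvu, fun a ha => ?_⟩
        have hmem : u ∈ G.neighborFinset v₀ := by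
          rw [SimpleGraph.mem_neighborFinset]
          exact (hu v₀ hvu).symm
        have hsingle : G.neighborFinset v₀ = {u} := by
          obtain ⟨c, hc⟩ := Finset.card_eq_one.mp
            (show (G.neighborFinset v₀).card = 1 by
              rw [SimpleGraph.card_neighborFinset_eq_degree, hv₀])
          rw [hc] at hmem ⊢
          rw [Finset.mem_singleton] at hmem
          rw [hmem]
        have hamem : a ∈ G.neighborFinset v₀ := by
          rw [SimpleGraph.mem_neighborFinset]
          exact ha.symm
        rw [hsingle, Finset.mem_singleton] at hamem
        exact hamem
    have hDjv : ∀ j, j ≠ u → j ≠ v → Dfun G j v = 2 :=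
      fun j h1 h2 => Dfun_not_adj G h2 (fun h => h1 (hleafv j h))
    obtain ⟨w₀⟩ := ‹Nonempty W›
    -- the distance-equalizer set
    set S2 : Set (V ⊕ V × W) :=
      Sum.inl '' {i : V | i ≠ u} ∪ Sum.inr '' {p : V × W | p.1 = u} with hS2def
    have hS2 : IsDistEqSet (corona G H) S2 := by
      have hchar : ∀ z : V ⊕ V × W, z ∉ S2 →
          z = Sum.inl u ∨ ∃ i w, i ≠ u ∧ z = Sum.inr (i, w) := by
        rintro (a | ⟨i, w⟩) hz
        · left
          by_contra hau
          exact hz (Set.mem_union_left _ ⟨a, fun h => hau (by rw [h]), rfl⟩)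
        · right
          refine ⟨i, w, fun hiu => ?_, rfl⟩
          exact hz (Set.mem_union_right _ ⟨(i, w), hiu, rfl⟩)
      rintro x y hx hy hxy
      rcases hchar x hx with rfl | ⟨i, w, hi, rfl⟩
      · rcases hchar y hy with rfl | ⟨j, w', hj, rfl⟩
        · exact absurd rfl hxy
        · refine ⟨Sum.inl j, Set.mem_union_left _ ⟨j, hj, rfl⟩, ?_⟩
          rw [dist_corona_eq hu, dist_corona_eq hu, Ffun_inl_inl, Ffun_inl_inr,
            Dfun_adj G (hu j hj).symm, Dfun_self]
      · rcases hchar y hy with rfl | ⟨j, w', hj, rfl⟩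
        · refine ⟨Sum.inl i, Set.mem_union_left _ ⟨i, hi, rfl⟩, ?_⟩
          rw [dist_corona_eq hu, dist_corona_eq hu, Ffun_inl_inl, Ffun_inl_inr,
            Dfun_adj G (hu i hi).symm, Dfun_self]
        · by_cases hij : i = j
          · subst hij
            refine ⟨Sum.inl i, Set.mem_union_left _ ⟨i, hi, rfl⟩, ?_⟩
            rw [dist_corona_eq hu, dist_corona_eq hu, Ffun_inl_inr, Ffun_inl_inr]
          · refine ⟨Sum.inr (u, w₀), Set.mem_union_right _ ⟨(u, w₀), rfl, rfl⟩, ?_⟩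
            rw [dist_corona_eq hu, dist_corona_eq hu,
              Ffun_inr_inr_ne G H (fun h => hi h.symm),
              Ffun_inr_inr_ne G H (fun h => hj h.symm),
              Dfun_adj G (hu i hi), Dfun_adj G (hu j hj)]
    have hS2card : S2.ncard = Fintype.card V - 1 + Fintype.card W := by
      rw [hS2def, Set.ncard_union_eq (by
          rw [Set.disjoint_left]
          rintro _ ⟨i, _, rfl⟩ ⟨p, _, h⟩
          simp at h)
        (Set.toFinite _) (Set.toFinite _),
        Set.ncard_image_of_injective _ Sum.inl_injective,
        Set.ncard_image_of_injective _ Sum.inr_injective,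
        ncard_setOf_ne, ncard_fiber]
    have hmemval : Fintype.card W + Fintype.card V - 1 ∈
        {n | ∃ S : Set (V ⊕ V × W), IsDistEqSet (corona G H) S ∧ S.ncard = n} :=
      ⟨S2, hS2, by rw [hS2card]; omega⟩
    -- key dichotomy
    have hkey : ∀ S : Set (V ⊕ V × W), IsDistEqSet (corona G H) S →
        (∀ w : W, Sum.inr (v, w) ∈ S) ∨ (∀ w : W, Sum.inr (u, w) ∈ S) := by
      intro S hS
      by_contra hcon
      push_neg at hcon
      obtain ⟨⟨w, hw⟩, ⟨w', hw'⟩⟩ := hcon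
      obtain ⟨s, _, hd⟩ := hS hw hw' (by simp [hvu])
      rw [dist_corona_eq hu, dist_corona_eq hu] at hd
      rcases s with a | ⟨j, z⟩
      · rw [Ffun_inl_inr, Ffun_inl_inr] at hd
        by_cases hau : a = u
        · subst hau
          rw [Dfun_adj G (hu v hvu), Dfun_self] at hd
          omega
        by_cases hav : a = v
        · subst hav
          rw [Dfun_self, Dfun_adj G (hu a hau).symm] at hd
          omega
        · rw [hDjv a hau hav, Dfun_adj G (hu a hau).symm] at hd
          omega
      · by_cases hjv : j = v
        · subst hjv
          rw [Ffun_inr_inr_same, Ffun_inr_inr_ne G H hvu,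
            Dfun_adj G (hu j hvu).symm] at hd
          have := Dfun_le_two H z w
          omega
        by_cases hju : j = u
        · subst hju
          rw [Ffun_inr_inr_ne G H hjv, Ffun_inr_inr_same,
            Dfun_adj G (hu v hvu)] at hd
          have := Dfun_le_two H z w'
          omega
        · rw [Ffun_inr_inr_ne G H hjv, Ffun_inr_inr_ne G H hju,
            hDjv j hju hjv, Dfun_adj G (hu j hju).symm] at hd
          omega
    refine le_antisymm (Nat.sInf_le hmemval) (le_csInf ⟨_, hmemval⟩ ?_)
    rintro m ⟨S, hS, rfl⟩
    have hcount : ∀ t : V, (∀ w : W, Sum.inr (t, w) ∈ S) →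
        Fintype.card W + Fintype.card V - 1 ≤ S.ncard := by
      intro t ht
      choose g hgS hgproj using fun i => cluster_meet hu hS i
      have hginj : Function.Injective g :=
        fun i j h => by rw [← hgproj i, ← hgproj j, h]
      set T : Set (V ⊕ V × W) := Sum.inr '' {p : V × W | p.1 = t} with hTdef
      set R : Set (V ⊕ V × W) := g '' {i : V | i ≠ t} with hRdef
      have hTS : T ⊆ S := by
        rintro _ ⟨⟨a, b⟩, hp, rfl⟩
        have : a = t := hp
        subst this
        exact ht b
      have hRS : R ⊆ S := by
        rintro _ ⟨i, _, rfl⟩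
        exact hgS i
      have hdisj : Disjoint T R := by
        rw [Set.disjoint_left]
        rintro _ ⟨⟨a, b⟩, hp, rfl⟩ ⟨i, hi, hgi⟩
        apply hi
        have hia : i = a := by rw [← hgproj i, hgi]; rfl
        rw [hia]
        exact hp
      have hTcard : T.ncard = Fintype.card W := by
        rw [hTdef, Set.ncard_image_of_injective _ Sum.inr_injective, ncard_fiber]
      have hRcard : R.ncard = Fintype.card V - 1 := by
        rw [hRdef, Set.ncard_image_of_injective _ hginj, ncard_setOf_ne]
      calc Fintype.card W + Fintype.card V - 1 = T.ncard + R.ncard := by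
            rw [hTcard, hRcard]; omega
      _ = (T ∪ R).ncard := (Set.ncard_union_eq hdisj (Set.toFinite _) (Set.toFinite _)).symm
      _ ≤ S.ncard := Set.ncard_le_ncard (Set.union_subset hTS hRS) (Set.toFinite S)
    rcases hkey S hS with hfull | hfull
    · exact hcount v hfull
    · exact hcount u hfull
end
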